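/- Let G = (S ∪ K, E) be a split graph with independent set S and clique K, with ω(G) = |K| odd. Then Tr₂(G) = ⌈ω(G)/2⌉ + 1 if and only if every vertex of K has at least two neighbors in S. -/

import Mathlib

open SimpleGraph

def TwoTransPart {V : Type*} (G : SimpleGraph V) (k : ℕ) (P : Fin k → Set V) : Prop :=
  (∀ i, (P i).Nonempty) ∧ (∀ v, ∃! i, v ∈ P i) ∧
    ∀ i j : Fin k, i < j → ∀ v ∈ P j,
      ∃ u w, u ∈ P i ∧ w ∈ P i ∧ u ≠ w ∧ G.Adj u v ∧ G.Adj w v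

/-- The 2-transitivity `Tr₂(G)`: the maximum size of a 2-transitive partition of `G`. -/
noncomputable def tr2 {V : Type*} (G : SimpleGraph V) : ℕ :=
  sSup {k | ∃ P : Fin k → Set V, TwoTransPart G k P}

section Aux

variable {V : Type*} [Fintype V] {G : SimpleGraph V} {S K : Set V}

private lemma mem_S_or_K (hcover : S ∪ K = Set.univ) (v : V) : v ∈ S ∨ v ∈ K := by
  have h : v ∈ S ∪ K := by rw [hcover]; exact Set.mem_univ v
  exact h

private lemma uniq_part {k : ℕ} {P : Fin k → Set V} (hu : ∀ v, ∃! i, v ∈ P i)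
    {i j : Fin k} {v : V} (hi : v ∈ P i) (hj : v ∈ P j) : i = j := by
  obtain ⟨w, -, h⟩ := hu v
  exact (h i hi).trans (h j hj).symm

private lemma sum_ncard_le {k : ℕ} {P : Fin k → Set V} (hu : ∀ v, ∃! i, v ∈ P i)
    (K : Set V) : ∑ i, (P i ∩ K).ncard ≤ K.ncard := by
  classical
  have hfin : ∀ i, (P i ∩ K).Finite := fun i => Set.toFinite _
  calc ∑ i, (P i ∩ K).ncard = ∑ i, ((hfin i).toFinset).card := by
        refine Finset.sum_congr rfl fun i _ => ?_
        exact Set.ncard_eq_toFinset_card _ _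
    _ = (Finset.univ.biUnion fun i => (hfin i).toFinset).card := by
        rw [Finset.card_biUnion]
        intro i _ j _ hij
        rw [Function.onFun, Finset.disjoint_left]
        intro a ha hb
        simp only [Set.Finite.mem_toFinset, Set.mem_inter_iff] at ha hb
        exact hij (uniq_part hu ha.1 hb.1)
    _ ≤ (K.toFinite.toFinset).card := by
        apply Finset.card_le_card
        intro a ha
        simp only [Finset.mem_biUnion, Set.Finite.mem_toFinset, Set.mem_inter_iff] at ha ⊢
        obtain ⟨i, -, -, haK⟩ := ha
        exact haK
    _ = K.ncard := (Set.ncard_eq_toFinset_card _ _).symm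

/-- If a vertex of `S` lies in a part `P j`, every lower part contains at least two
vertices of `K`. -/
private lemma two_le_K_below (hcover : S ∪ K = Set.univ)
    (hS : ∀ u ∈ S, ∀ v ∈ S, ¬ G.Adj u v)
    {k : ℕ} {P : Fin k → Set V} (htr : TwoTransPart G k P)
    {i j : Fin k} (hij : i < j) {s : V} (hsP : s ∈ P j) (hsS : s ∈ S) :
    2 ≤ (P i ∩ K).ncard := by
  obtain ⟨u, w, huP, hwP, huw, hau, haw⟩ := htr.2.2 i j hij s hsP
  have huK : u ∈ K := by
    rcases mem_S_or_K hcover u with h | h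
    · exact absurd hau (hS u h s hsS)
    · exact h
  have hwK : w ∈ K := by
    rcases mem_S_or_K hcover w with h | h
    · exact absurd haw (hS w h s hsS)
    · exact h
  have h1 : 1 < (P i ∩ K).ncard := by
    rw [Set.one_lt_ncard_iff]
    exact ⟨u, w, ⟨huP, huK⟩, ⟨hwP, hwK⟩, huw⟩
  omega

/-- If a vertex `v₀` lies in a part above a part disjoint from `K`, then it has two
neighbours in `S`. -/
private lemma two_le_S_nbrs (hcover : S ∪ K = Set.univ)
    {k : ℕ} {P : Fin k → Set V} (htr : TwoTransPart G k P)
    {i t : Fin k} (hit : i < t) {v₀ : V} (hv₀ : v₀ ∈ P t) (hempty : P i ∩ K = ∅) :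
    2 ≤ (G.neighborSet v₀ ∩ S).ncard := by
  obtain ⟨u, w, huP, hwP, huw, hau, haw⟩ := htr.2.2 i t hit v₀ hv₀
  have huS : u ∈ S := by
    rcases mem_S_or_K hcover u with h | h
    · exact h
    · exact absurd (show u ∈ P i ∩ K from ⟨huP, h⟩) (by rw [hempty]; simp)
  have hwS : w ∈ S := by
    rcases mem_S_or_K hcover w with h | h
    · exact h
    · exact absurd (show w ∈ P i ∩ K from ⟨hwP, h⟩) (by rw [hempty]; simp)
  have h1 : 1 < (G.neighborSet v₀ ∩ S).ncard := by
    rw [Set.one_lt_ncard_iff]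
    exact ⟨u, w, ⟨hau.symm, huS⟩, ⟨haw.symm, hwS⟩, huw⟩
  omega

/-- Generic counting step. -/
private lemma key_count {k : ℕ} (g : Fin k → ℕ) (R : Finset (Fin k))
    (h2 : ∀ i ∉ R, 2 ≤ g i) :
    2 * (k - R.card) + ∑ i ∈ R, g i ≤ ∑ i, g i := by
  classical
  have hsub : R ⊆ Finset.univ := Finset.subset_univ R
  have hcard : (Finset.univ \ R).card = k - R.card := by
    rw [Finset.card_sdiff_of_subset hsub, Finset.card_univ, Fintype.card_fin]
  have hlb : (Finset.univ \ R).card • 2 ≤ ∑ i ∈ Finset.univ \ R, g i := by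
    apply Finset.card_nsmul_le_sum
    intro i hi
    exact h2 i (Finset.mem_sdiff.mp hi).2
  have hsplit : ∑ i ∈ Finset.univ \ R, g i + ∑ i ∈ R, g i = ∑ i, g i :=
    Finset.sum_sdiff hsub
  rw [hcard, smul_eq_mul] at hlb
  omega

/-- Upper bound: any 2-transitive partition of a split graph with `|K| = 2m+1` has at
most `m+2` parts. -/
private lemma upper_bound (hcover : S ∪ K = Set.univ)
    (hS : ∀ u ∈ S, ∀ v ∈ S, ¬ G.Adj u v)
    {k m : ℕ} {P : Fin k → Set V} (htr : TwoTransPart G k P)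
    (hcard : K.ncard = 2 * m + 1) : k ≤ m + 2 := by
  classical
  by_contra hlt
  push_neg at hlt
  have hk3 : 3 ≤ k := by omega
  set g : Fin k → ℕ := fun i => (P i ∩ K).ncard with hg
  have hsum : ∑ i, g i ≤ 2 * m + 1 := by
    rw [← hcard]; exact sum_ncard_le htr.2.1 K
  set top : Fin k := ⟨k - 1, by omega⟩ with htopdef
  obtain ⟨v, hv⟩ := htr.1 top
  rcases mem_S_or_K hcover v with hvS | hvK
  · -- top vertex in S: all lower parts have ≥ 2 vertices of K
    have h2 : ∀ i ∉ ({top} : Finset (Fin k)), 2 ≤ g i := by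
      intro i hi
      simp only [Finset.mem_singleton] at hi
      have hitop : i < top := by
        have : i.val ≠ k - 1 := fun h => hi (Fin.ext h)
        have := i.isLt
        show i.val < k - 1
        omega
      exact two_le_K_below hcover hS htr hitop hv hvS
    have := key_count g {top} h2
    simp only [Finset.card_singleton, Finset.sum_singleton] at this
    omega
  · have hgtop : 1 ≤ g top := by
      have : 0 < g top := (Set.ncard_pos (Set.toFinite _)).mpr ⟨v, hv, hvK⟩
      omega
    by_cases hall : ∀ i : Fin k, 0 < i.val → i.val < k - 1 → 2 ≤ g i
    · set z : Fin k := ⟨0, by omega⟩ with hzdef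
      have h2 : ∀ i ∉ ({top, z} : Finset (Fin k)), 2 ≤ g i := by
        intro i hi
        simp only [Finset.mem_insert, Finset.mem_singleton] at hi
        push_neg at hi
        have h1 : i.val ≠ k - 1 := fun h => hi.1 (Fin.ext h)
        have h0 : i.val ≠ 0 := fun h => hi.2 (Fin.ext h)
        have := i.isLt
        exact hall i (by omega) (by omega)
      have := key_count g {top, z} h2
      have hcard2 : ({top, z} : Finset (Fin k)).card = 2 := by
        rw [Finset.card_insert_of_notMem, Finset.card_singleton]
        simp only [Finset.mem_singleton]
        intro h
        have := congrArg Fin.val h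
        simp [htopdef, hzdef] at this
        omega
      have hsum2 : ∑ i ∈ ({top, z} : Finset (Fin k)), g i = g top + g z := by
        rw [Finset.sum_insert, Finset.sum_singleton]
        simp only [Finset.mem_singleton]
        intro h
        have := congrArg Fin.val h
        simp [htopdef, hzdef] at this
        omega
      rw [hcard2, hsum2] at this
      omega
    · push_neg at hall
      obtain ⟨j₀, hj₀1, hj₀2, hj₀3⟩ := hall
      set Jset : Finset (Fin k) :=
        Finset.univ.filter (fun i => 0 < i.val ∧ i.val < k - 1 ∧ g i < 2) with hJ
      have hJne : Jset.Nonempty := ⟨j₀, by simp [hJ]; exact ⟨hj₀1, hj₀2, by omega⟩⟩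
      set j : Fin k := Jset.max' hJne with hjdef
      have hjmem := Jset.max'_mem hJne
      rw [← hjdef] at hjmem
      simp only [hJ, Finset.mem_filter] at hjmem
      obtain ⟨-, hj1, hj2, hj3⟩ := hjmem
      have hjtop : j < top := by simp only [Fin.lt_def]; omega
      obtain ⟨u, w, huP, hwP, huw, hau, haw⟩ := htr.2.2 j top hjtop v hv
      -- at least one of u, w is in S
      have hsex : ∃ s ∈ P j, s ∈ S := by
        rcases mem_S_or_K hcover u with h | hu
        · exact ⟨u, huP, h⟩
        rcases mem_S_or_K hcover w with h | hw
        · exact ⟨w, hwP, h⟩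
        exfalso
        have h1 : 1 < g j := by
          show 1 < (P j ∩ K).ncard
          rw [Set.one_lt_ncard_iff]
          exact ⟨u, w, ⟨huP, hu⟩, ⟨hwP, hw⟩, huw⟩
        omega
      obtain ⟨s, hsP, hsS⟩ := hsex
      have h2 : ∀ i ∉ ({top, j} : Finset (Fin k)), 2 ≤ g i := by
        intro i hi
        simp only [Finset.mem_insert, Finset.mem_singleton] at hi
        push_neg at hi
        rcases lt_trichotomy i j with hlt' | heq | hgt
        · exact two_le_K_below hcover hS htr hlt' hsP hsS
        · exact absurd heq hi.2
        · have hiJ : i ∉ Jset := fun hmem => absurd (Finset.le_max' Jset i hmem)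
            (by rw [← hjdef]; exact not_le.mpr hgt)
          simp only [hJ, Finset.mem_filter, Finset.mem_univ, true_and] at hiJ
          push_neg at hiJ
          have hi1 : 0 < i.val := by
            have : j.val < i.val := hgt
            omega
          have hi2 : i.val < k - 1 := by
            have : i.val ≠ k - 1 := fun h => hi.1 (Fin.ext h)
            have := i.isLt
            omega
          have := hiJ hi1 hi2
          omega
      have := key_count g {top, j} h2
      have hcard2 : ({top, j} : Finset (Fin k)).card = 2 := by
        rw [Finset.card_insert_of_notMem, Finset.card_singleton]
        simp only [Finset.mem_singleton]
        intro h
        have := congrArg Fin.val h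
        simp only [htopdef] at this
        omega
      have hsum2 : ∑ i ∈ ({top, j} : Finset (Fin k)), g i = g top + g j := by
        rw [Finset.sum_insert, Finset.sum_singleton]
        simp only [Finset.mem_singleton]
        intro h
        have := congrArg Fin.val h
        simp only [htopdef] at this
        omega
      rw [hcard2, hsum2] at this
      omega

/-- If some vertex of `K` has at most one neighbour in `S`, there is no 2-transitive
partition with `m+2` parts. -/
private lemma no_partition (hcover : S ∪ K = Set.univ)
    (hS : ∀ u ∈ S, ∀ v ∈ S, ¬ G.Adj u v)
    {m : ℕ} {P : Fin (m + 2) → Set V} (htr : TwoTransPart G (m + 2) P)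
    (hcard : K.ncard = 2 * m + 1) {v₀ : V} (hv₀K : v₀ ∈ K)
    (hv₀ : (G.neighborSet v₀ ∩ S).ncard ≤ 1) : False := by
  classical
  set g : Fin (m + 2) → ℕ := fun i => (P i ∩ K).ncard with hg
  have hsum : ∑ i, g i ≤ 2 * m + 1 := by
    rw [← hcard]; exact sum_ncard_le htr.2.1 K
  set top : Fin (m + 2) := ⟨m + 1, by omega⟩ with htopdef
  -- Step 1: top part contains no vertex of S
  have htopS : ∀ s ∈ P top, s ∉ S := by
    intro s hsP hsS
    have h2 : ∀ i ∉ ({top} : Finset (Fin (m + 2))), 2 ≤ g i := by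
      intro i hi
      simp only [Finset.mem_singleton] at hi
      have hitop : i < top := by
        have : i.val ≠ m + 1 := fun h => hi (Fin.ext h)
        have := i.isLt
        show i.val < m + 1
        omega
      exact two_le_K_below hcover hS htr hitop hsP hsS
    have := key_count g {top} h2
    simp only [Finset.card_singleton, Finset.sum_singleton] at this
    omega
  obtain ⟨v, hv⟩ := htr.1 top
  have hvK : v ∈ K := by
    rcases mem_S_or_K hcover v with h | h
    · exact absurd h (htopS v hv)
    · exact h
  have hgtop : 1 ≤ g top := by
    have : 0 < g top := (Set.ncard_pos (Set.toFinite _)).mpr ⟨v, hv, hvK⟩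
    omega
  obtain ⟨t, hv₀P, -⟩ := htr.2.1 v₀
  by_cases hall : ∀ i : Fin (m + 2), 0 < i.val → i.val < m + 1 → 2 ≤ g i
  · set z : Fin (m + 2) := ⟨0, by omega⟩ with hzdef
    have h2 : ∀ i ∉ ({top, z} : Finset (Fin (m + 2))), 2 ≤ g i := by
      intro i hi
      simp only [Finset.mem_insert, Finset.mem_singleton] at hi
      push_neg at hi
      have h1 : i.val ≠ m + 1 := fun h => hi.1 (Fin.ext h)
      have h0 : i.val ≠ 0 := fun h => hi.2 (Fin.ext h)
      have := i.isLt
      exact hall i (by omega) (by omega)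
    have hkey := key_count g {top, z} h2
    have hcard2 : ({top, z} : Finset (Fin (m + 2))).card = 2 := by
      rw [Finset.card_insert_of_notMem, Finset.card_singleton]
      simp only [Finset.mem_singleton]
      intro h
      have := congrArg Fin.val h
      simp [htopdef, hzdef] at this
    have hsum2 : ∑ i ∈ ({top, z} : Finset (Fin (m + 2))), g i = g top + g z := by
      rw [Finset.sum_insert, Finset.sum_singleton]
      simp only [Finset.mem_singleton]
      intro h
      have := congrArg Fin.val h
      simp [htopdef, hzdef] at this
    rw [hcard2, hsum2] at hkey
    have hgz : g z = 0 := by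
      have hle : (m + 2) - 2 = m := by omega
      rw [hle] at hkey
      omega
    have hzempty : P z ∩ K = ∅ := (Set.ncard_eq_zero (Set.toFinite _)).mp hgz
    have htz : z < t := by
      have htne : t ≠ z := by
        intro h
        rw [h] at hv₀P
        exact absurd (show v₀ ∈ P z ∩ K from ⟨hv₀P, hv₀K⟩) (by rw [hzempty]; simp)
      have : t.val ≠ 0 := fun h => htne (Fin.ext (by simp [hzdef, h]))
      simp only [Fin.lt_def, hzdef]
      omega
    have := two_le_S_nbrs hcover htr htz hv₀P hzempty
    omega
  · push_neg at hall
    obtain ⟨j₀, hj₀1, hj₀2, hj₀3⟩ := hall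
    set Jset : Finset (Fin (m + 2)) :=
      Finset.univ.filter (fun i => 0 < i.val ∧ i.val < m + 1 ∧ g i < 2) with hJ
    have hJne : Jset.Nonempty := ⟨j₀, by simp [hJ]; exact ⟨hj₀1, by omega, by omega⟩⟩
    set j : Fin (m + 2) := Jset.max' hJne with hjdef
    have hjmem := Jset.max'_mem hJne
    rw [← hjdef] at hjmem
    simp only [hJ, Finset.mem_filter] at hjmem
    obtain ⟨-, hj1, hj2, hj3⟩ := hjmem
    have hjtop : j < top := by simp only [Fin.lt_def]; omega
    obtain ⟨u, w, huP, hwP, huw, hau, haw⟩ := htr.2.2 j top hjtop v hv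
    have hsex : ∃ s ∈ P j, s ∈ S := by
      rcases mem_S_or_K hcover u with h | hu
      · exact ⟨u, huP, h⟩
      rcases mem_S_or_K hcover w with h | hw
      · exact ⟨w, hwP, h⟩
      exfalso
      have h1 : 1 < g j := by
        show 1 < (P j ∩ K).ncard
        rw [Set.one_lt_ncard_iff]
        exact ⟨u, w, ⟨huP, hu⟩, ⟨hwP, hw⟩, huw⟩
      omega
    obtain ⟨s, hsP, hsS⟩ := hsex
    have h2 : ∀ i ∉ ({top, j} : Finset (Fin (m + 2))), 2 ≤ g i := by
      intro i hi
      simp only [Finset.mem_insert, Finset.mem_singleton] at hi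
      push_neg at hi
      rcases lt_trichotomy i j with hlt' | heq | hgt
      · exact two_le_K_below hcover hS htr hlt' hsP hsS
      · exact absurd heq hi.2
      · have hiJ : i ∉ Jset := fun hmem => absurd (Finset.le_max' Jset i hmem)
          (by rw [← hjdef]; exact not_le.mpr hgt)
        simp only [hJ, Finset.mem_filter, Finset.mem_univ, true_and] at hiJ
        push_neg at hiJ
        have hi1 : 0 < i.val := by
          have : j.val < i.val := hgt
          omega
        have hi2 : i.val < m + 1 := by
          have : i.val ≠ m + 1 := fun h => hi.1 (Fin.ext h)
          have := i.isLt
          omega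
        have := hiJ hi1 hi2
        omega
    have hjtne : j ≠ top := fun h => by
      have := congrArg Fin.val h
      simp only [htopdef] at this
      omega
    have hkey := key_count g {top, j} h2
    have hcard2 : ({top, j} : Finset (Fin (m + 2))).card = 2 := by
      rw [Finset.card_insert_of_notMem, Finset.card_singleton]
      simp only [Finset.mem_singleton]
      exact fun h => hjtne h.symm
    have hsum2 : ∑ i ∈ ({top, j} : Finset (Fin (m + 2))), g i = g top + g j := by
      rw [Finset.sum_insert, Finset.sum_singleton]
      simp only [Finset.mem_singleton]
      exact fun h => hjtne h.symm
    rw [hcard2, hsum2] at hkey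
    have hgj : g j = 0 := by
      have hle : (m + 2) - 2 = m := by omega
      rw [hle] at hkey
      omega
    have hjempty : P j ∩ K = ∅ := (Set.ncard_eq_zero (Set.toFinite _)).mp hgj
    have hPjS : ∀ x ∈ P j, x ∈ S := by
      intro x hx
      rcases mem_S_or_K hcover x with h | h
      · exact h
      · exact absurd (show x ∈ P j ∩ K from ⟨hx, h⟩) (by rw [hjempty]; simp)
    rcases lt_trichotomy t j with htj | heq | hjt
    · -- v₀ is in a part below j; squeeze g t ≤ 2
      have httop : t ≠ top := by
        intro h
        have := congrArg Fin.val h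
        simp only [htopdef] at this
        have : t.val < j.val := htj
        omega
      have htj' : t ≠ j := ne_of_lt htj
      have h2' : ∀ i ∉ ({top, j, t} : Finset (Fin (m + 2))), 2 ≤ g i := by
        intro i hi
        simp only [Finset.mem_insert, Finset.mem_singleton] at hi
        push_neg at hi
        refine h2 i ?_
        simp only [Finset.mem_insert, Finset.mem_singleton]
        push_neg
        exact ⟨hi.1, hi.2.1⟩
      have hkey3 := key_count g {top, j, t} h2'
      have hcard3 : ({top, j, t} : Finset (Fin (m + 2))).card = 3 := by
        rw [Finset.card_insert_of_notMem, Finset.card_insert_of_notMem,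
          Finset.card_singleton]
        · simp only [Finset.mem_singleton]
          exact fun h => htj' h.symm
        · simp only [Finset.mem_insert, Finset.mem_singleton]
          push_neg
          exact ⟨fun h => hjtne h.symm, fun h => httop h.symm⟩
      have hsum3 : ∑ i ∈ ({top, j, t} : Finset (Fin (m + 2))), g i
          = g top + g j + g t := by
        rw [Finset.sum_insert, Finset.sum_insert, Finset.sum_singleton, add_assoc]
        · simp only [Finset.mem_singleton]
          exact fun h => htj' h.symm
        · simp only [Finset.mem_insert, Finset.mem_singleton]
          push_neg
          exact ⟨fun h => hjtne h.symm, fun h => httop h.symm⟩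
      rw [hcard3, hsum3] at hkey3
      have hgt2 : g t ≤ 2 := by
        have hm1 : 1 ≤ m := by
          have : 0 < j.val := hj1
          have : t.val < j.val := htj
          omega
        have hle : (m + 2) - 3 = m - 1 := by omega
        rw [hle] at hkey3
        omega
      -- both u and w lie in P j ⊆ S, and each has two K-neighbours in P t
      have hadj : ∀ s' ∈ P j, G.Adj v₀ s' := by
        intro s' hs'P
        have hs'S : s' ∈ S := hPjS s' hs'P
        obtain ⟨a, b, haP, hbP, hab, haa, hba⟩ := htr.2.2 t j htj s' hs'P
        have haK : a ∈ K := by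
          rcases mem_S_or_K hcover a with h | h
          · exact absurd haa (hS a h s' hs'S)
          · exact h
        have hbK : b ∈ K := by
          rcases mem_S_or_K hcover b with h | h
          · exact absurd hba (hS b h s' hs'S)
          · exact h
        by_cases hva : v₀ = a
        · rw [hva]; exact haa
        by_cases hvb : v₀ = b
        · rw [hvb]; exact hba
        exfalso
        have h3 : 2 < (P t ∩ K).ncard := by
          rw [Set.two_lt_ncard_iff]
          exact ⟨v₀, a, b, ⟨hv₀P, hv₀K⟩, ⟨haP, haK⟩, ⟨hbP, hbK⟩, hva, hvb, hab⟩
        have : 2 < g t := h3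
        omega
      have huS : u ∈ S := hPjS u huP
      have hwS : w ∈ S := hPjS w hwP
      have : 2 ≤ (G.neighborSet v₀ ∩ S).ncard := by
        have h1 : 1 < (G.neighborSet v₀ ∩ S).ncard := by
          rw [Set.one_lt_ncard_iff]
          exact ⟨u, w, ⟨hadj u huP, huS⟩, ⟨hadj w hwP, hwS⟩, huw⟩
        omega
      omega
    · exact absurd (show v₀ ∈ P j ∩ K from ⟨heq ▸ hv₀P, hv₀K⟩)
        (by rw [hjempty]; simp)
    · have := two_le_S_nbrs hcover htr hjt hv₀P hjempty
      omega

/-- Construction of a 2-transitive partition with `m+2` parts when every clique vertex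
has at least two neighbours in `S`. -/
private lemma exists_partition (hdisj : Disjoint S K) (hcover : S ∪ K = Set.univ)
    (hK : ∀ u ∈ K, ∀ v ∈ K, u ≠ v → G.Adj u v)
    {m : ℕ} (hcard : K.ncard = 2 * m + 1)
    (hnb : ∀ v ∈ K, 2 ≤ (G.neighborSet v ∩ S).ncard) :
    ∃ P : Fin (m + 2) → Set V, TwoTransPart G (m + 2) P := by
  classical
  have hKfin : Nat.card K = 2 * m + 1 := by
    rw [Nat.card_coe_set_eq, hcard]
  let e : K ≃ Fin (2 * m + 1) := Finite.equivFinOfCardEq hKfin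
  let f : Fin (2 * m + 1) → V := fun r => (e.symm r : V)
  have hfK : ∀ r, f r ∈ K := fun r => (e.symm r).2
  have hfinj : Function.Injective f := fun a b h => by
    have : e.symm a = e.symm b := Subtype.ext h
    exact e.symm.injective this
  have hfsurj : ∀ v ∈ K, ∃ r, f r = v := fun v hv => ⟨e ⟨v, hv⟩, by simp [f]⟩
  have hKne : K.Nonempty := Set.nonempty_of_ncard_ne_zero (by omega)
  have hSne : S.Nonempty := by
    obtain ⟨v, hv⟩ := hKne
    have := hnb v hv
    have hpos : 0 < (G.neighborSet v ∩ S).ncard := by omega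
    obtain ⟨x, hx⟩ := (Set.ncard_pos (Set.toFinite _)).mp hpos
    exact ⟨x, hx.2⟩
  refine ⟨fun i => if i.val = 0 then S else
    {v | ∃ r : Fin (2 * m + 1), f r = v ∧ r.val / 2 + 1 = i.val}, ?_, ?_, ?_⟩
  · -- nonempty
    intro i
    by_cases h0 : i.val = 0
    · simp only [h0, if_pos rfl]
      simpa [h0] using hSne
    · have hi1 : 1 ≤ i.val := by omega
      have hi2 : i.val ≤ m + 1 := by have := i.isLt; omega
      refine ⟨f ⟨2 * (i.val - 1), by omega⟩, ?_⟩
      simp only [if_neg h0, Set.mem_setOf_eq]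
      exact ⟨⟨2 * (i.val - 1), by omega⟩, rfl, by simp; omega⟩
  · -- existence and uniqueness of part
    intro v
    rcases mem_S_or_K hcover v with hvS | hvK
    · refine ⟨⟨0, by omega⟩, by simpa using hvS, ?_⟩
      intro i hi
      by_cases h0 : i.val = 0
      · exact Fin.ext (by simpa using h0)
      · exfalso
        simp only [if_neg h0, Set.mem_setOf_eq] at hi
        obtain ⟨r, hr, -⟩ := hi
        exact absurd hvS (Set.disjoint_right.mp hdisj (hr ▸ hfK r))
    · obtain ⟨r, hr⟩ := hfsurj v hvK
      have hrval : r.val / 2 ≤ m := by have := r.isLt; omega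
      refine ⟨⟨r.val / 2 + 1, by omega⟩, ?_, ?_⟩
      · simp only [Set.mem_setOf_eq, if_neg (by omega : ¬(r.val / 2 + 1 = 0))]
        exact ⟨r, hr, rfl⟩
      · intro i hi
        by_cases h0 : i.val = 0
        · exfalso
          simp only [if_pos h0] at hi
          exact (Set.disjoint_left.mp hdisj hi) hvK
        · simp only [if_neg h0, Set.mem_setOf_eq] at hi
          obtain ⟨r', hr', hr'2⟩ := hi
          have : r' = r := hfinj (hr'.trans hr.symm)
          exact Fin.ext (by rw [← hr'2, this])
  · -- adjacency
    intro i j hij v hv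
    have hj0 : j.val ≠ 0 := by
      have : i.val < j.val := hij
      omega
    simp only [if_neg hj0, Set.mem_setOf_eq] at hv
    obtain ⟨rv, hrv, hrv2⟩ := hv
    have hvK : v ∈ K := hrv ▸ hfK rv
    by_cases h0 : i.val = 0
    · -- the part of S
      have hnb2 := hnb v hvK
      have h2 : 1 < (G.neighborSet v ∩ S).ncard := by omega
      obtain ⟨u, w, hu, hw, huw⟩ := (Set.one_lt_ncard_iff (Set.toFinite _)).mp h2
      refine ⟨u, w, ?_, ?_, huw, hu.1.symm, hw.1.symm⟩
      · simp only [if_pos h0]; exact hu.2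
      · simp only [if_pos h0]; exact hw.2
    · have hi1 : 1 ≤ i.val := by omega
      have hijv : i.val < j.val := hij
      have hjle : j.val ≤ m + 1 := by have := j.isLt; omega
      have hile : i.val ≤ m := by omega
      set a : Fin (2 * m + 1) := ⟨2 * (i.val - 1), by omega⟩ with hadef
      set b : Fin (2 * m + 1) := ⟨2 * (i.val - 1) + 1, by omega⟩ with hbdef
      have haP : f a ∈ {v | ∃ r : Fin (2 * m + 1), f r = v ∧ r.val / 2 + 1 = i.val} :=
        ⟨a, rfl, by simp [hadef]; omega⟩
      have hbP : f b ∈ {v | ∃ r : Fin (2 * m + 1), f r = v ∧ r.val / 2 + 1 = i.val} :=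
        ⟨b, rfl, by simp [hbdef]; omega⟩
      have hane : a ≠ rv := by
        intro h
        have := congrArg Fin.val h
        simp only [hadef] at this
        omega
      have hbne : b ≠ rv := by
        intro h
        have := congrArg Fin.val h
        simp only [hbdef] at this
        omega
      refine ⟨f a, f b, ?_, ?_, ?_, ?_, ?_⟩
      · simp only [if_neg h0]; exact haP
      · simp only [if_neg h0]; exact hbP
      · intro h
        have := hfinj h
        have := congrArg Fin.val this
        simp [hadef, hbdef] at this
      · exact hK (f a) (hfK a) v hvK (fun h => hane (hfinj (h.trans hrv.symm) ▸ rfl))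
      · exact hK (f b) (hfK b) v hvK (fun h => hbne (hfinj (h.trans hrv.symm) ▸ rfl))

end Aux

theorem stmt16 {V : Type*} [Fintype V] (G : SimpleGraph V) (S K : Set V)
    (hdisj : Disjoint S K) (hcover : S ∪ K = Set.univ)
    (hS : ∀ u ∈ S, ∀ v ∈ S, ¬ G.Adj u v)
    (hK : ∀ u ∈ K, ∀ v ∈ K, u ≠ v → G.Adj u v)
    (hmax : ∀ t : Set V, (∀ u ∈ t, ∀ v ∈ t, u ≠ v → G.Adj u v) → t.ncard ≤ K.ncard)
    (hodd : Odd K.ncard) :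
    tr2 G = (K.ncard + 1) / 2 + 1 ↔ ∀ v ∈ K, 2 ≤ (G.neighborSet v ∩ S).ncard := by
  classical
  obtain ⟨m, hm⟩ := hodd
  have hval : (K.ncard + 1) / 2 + 1 = m + 2 := by omega
  rw [hval]
  have hKne : K.Nonempty := Set.nonempty_of_ncard_ne_zero (by omega)
  have hVne : Nonempty V := ⟨hKne.choose⟩
  have hone : 1 ∈ {k | ∃ P : Fin k → Set V, TwoTransPart G k P} := by
    refine ⟨fun _ => Set.univ, fun i => Set.univ_nonempty, fun v => ⟨0, Set.mem_univ v,
      fun i _ => Subsingleton.elim i 0⟩, fun i j hij => absurd hij ?_⟩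
    have : i = j := Subsingleton.elim i j
    simp [this]
  have hbdd : ∀ x ∈ {k | ∃ P : Fin k → Set V, TwoTransPart G k P}, x ≤ m + 2 := by
    rintro x ⟨P, hP⟩
    exact upper_bound hcover hS hP hm
  constructor
  · intro h v hvK
    by_contra hlt
    push_neg at hlt
    have hmem := Nat.sSup_mem (s := {k | ∃ P : Fin k → Set V, TwoTransPart G k P})
      ⟨1, hone⟩ ⟨m + 2, hbdd⟩
    rw [tr2] at h
    rw [h] at hmem
    obtain ⟨P, hP⟩ := hmem
    exact no_partition hcover hS hP hm hvK (by omega)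
  · intro hnb
    apply le_antisymm
    · exact csSup_le ⟨1, hone⟩ hbdd
    · exact le_csSup ⟨m + 2, hbdd⟩ (exists_partition hdisj hcover hK hm hnb)
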